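/- Let k be a natural number, S ⊆ {0,1}^k a nonempty finite set, ε > 0 and t ≥ 1. Let h : {0,1}^k → ℝ be a table with all entries nonnegative, and let (X_γ)_{γ ∈ S} be independent Laplace random variables with scale b = 2|S|·ε^{−1}·2^{−k/2}. Then with probability at least 1 − exp(−t), the table h + Σ_{γ ∈ S} X_γ · f^γ + (4t|S|²·ε^{−1}·2^{−k/2}) · f^{0} has all entries nonnegative, where 0 denotes the all-zeros index so that f^{0} is the constant table with value 2^{−k/2}. In particular, Pr[ Σ_{γ ∈ S} |X_γ| ≤ 4t|S|²/(ε·2^{k/2}) ] ≥ 1 − exp(−t). -/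

import Mathlib

open MeasureTheory Finset

/-- The Laplace distribution on `ℝ` with scale `b`. -/
noncomputable def laplaceMeasure (b : ℝ) : Measure ℝ :=
  MeasureTheory.volume.withDensity fun x => ENNReal.ofReal (1 / (2 * b) * Real.exp (-|x| / b))

/-- `⟨γ,j⟩ = Σ_i γ_i j_i` on the Boolean hypercube `{0,1}^k`. -/
def cubeInner {k : ℕ} (γ j : Fin k → Bool) : ℕ :=
  (Finset.univ.filter fun i => γ i = true ∧ j i = true).card

/-- The Fourier basis vector `f^j`, with `f^j_γ = (−1)^{⟨γ,j⟩}·2^{−k/2}`. -/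
noncomputable def cubeFourier {k : ℕ} (j γ : Fin k → Bool) : ℝ :=
  (-1 : ℝ) ^ cubeInner γ j * (2 : ℝ) ^ (-(k : ℝ) / 2)

section helpers

lemma integrable_exp_neg_abs' : Integrable (fun x : ℝ => Real.exp (-|x|)) := by
  rw [← integrableOn_univ, ← Set.Iic_union_Ioi (a := (0:ℝ))]
  refine IntegrableOn.union ?_ ?_
  · refine (integrableOn_exp_Iic 0).congr_fun ?_ measurableSet_Iic
    intro x hx
    simp only [Set.mem_Iic] at hx
    simp [abs_of_nonpos hx]
  · refine ((exp_neg_integrableOn_Ioi 0 one_pos).congr_fun ?_ measurableSet_Ioi)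
    intro x hx
    simp only [Set.mem_Ioi] at hx
    simp [abs_of_pos hx]

lemma integrable_exp_neg_mul_abs {c : ℝ} (hc : 0 < c) :
    Integrable (fun x : ℝ => Real.exp (-(c * |x|))) := by
  have h := (integrable_comp_mul_left_iff (fun x : ℝ => Real.exp (-|x|)) hc.ne').2
    integrable_exp_neg_abs'
  refine h.congr (Filter.Eventually.of_forall fun x => ?_)
  simp [abs_mul, abs_of_pos hc]

lemma integral_exp_neg_mul_abs {c : ℝ} (hc : 0 < c) :
    ∫ x : ℝ, Real.exp (-(c * |x|)) = 2 / c := by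
  rw [show (fun x : ℝ => Real.exp (-(c * |x|))) = (fun x : ℝ => (fun y => Real.exp (-(c*y))) |x|) by rfl]
  rw [integral_comp_abs (f := fun y => Real.exp (-(c*y)))]
  rw [integral_comp_mul_left_Ioi (fun u => Real.exp (-u)) 0 hc]
  simp [integral_exp_neg_Ioi, integral_exp_Iic_zero, div_eq_mul_inv, mul_comm]

lemma lintegral_aexp {a c : ℝ} (ha : 0 ≤ a) (hc : 0 < c) :
    ∫⁻ x : ℝ, ENNReal.ofReal (a * Real.exp (-(c * |x|))) = ENNReal.ofReal (a * (2 / c)) := by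
  rw [← ofReal_integral_eq_lintegral_ofReal
      (((integrable_exp_neg_mul_abs hc)).const_mul a)
      (Filter.Eventually.of_forall fun x => by positivity)]
  rw [integral_const_mul, integral_exp_neg_mul_abs hc]

lemma laplace_prob {b : ℝ} (hb : 0 < b) : IsProbabilityMeasure (laplaceMeasure b) := by
  constructor
  rw [laplaceMeasure, withDensity_apply _ MeasurableSet.univ, Measure.restrict_univ]
  simp_rw [show ∀ x : ℝ, -|x|/b = -(b⁻¹ * |x|) from fun x => by ring]
  rw [lintegral_aexp (by positivity) (by positivity)]
  rw [show 1/(2*b) * (2 / b⁻¹) = 1 by field_simp]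
  exact ENNReal.ofReal_one

lemma laplace_mgf {b l : ℝ} (hb : 0 < b) (hl : 0 ≤ l) (hlb : l * b < 1) :
    ∫⁻ x, ENNReal.ofReal (Real.exp (l * |x|)) ∂(laplaceMeasure b)
      = ENNReal.ofReal (1 / (1 - l * b)) := by
  have hc : 0 < 1/b - l := by
    have : l < 1/b := by rw [lt_div_iff₀ hb]; exact hlb
    linarith
  have h2 : (0:ℝ) < 1 - l * b := by nlinarith
  rw [laplaceMeasure, lintegral_withDensity_eq_lintegral_mul _
      (by fun_prop) (by fun_prop)]
  have hx : ∀ x : ℝ, ((fun x => ENNReal.ofReal (1 / (2 * b) * Real.exp (-|x| / b))) *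
      fun x => ENNReal.ofReal (Real.exp (l * |x|))) x
      = ENNReal.ofReal ((1/(2*b)) * Real.exp (-((1/b - l) * |x|))) := by
    intro x
    simp only [Pi.mul_apply]
    rw [← ENNReal.ofReal_mul (by positivity), mul_assoc, ← Real.exp_add]
    congr 2
    field_simp
    ring
  simp_rw [hx]
  rw [lintegral_aexp (by positivity) hc]
  congr 1
  have hb' : b ≠ 0 := hb.ne'
  have h2' : 1 - l * b ≠ 0 := h2.ne'
  rw [show 1/b - l = (1 - l*b)/b by field_simp]
  field_simp

lemma laplace_piece {b c : ℝ} (hb : 0 < b) (hc : 0 ≤ c) :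
    ∫⁻ y in Set.Ioi c, ENNReal.ofReal (1 / (2 * b) * Real.exp (-|y| / b))
      = ENNReal.ofReal (Real.exp (-(c/b)) / 2) := by
  rw [setLIntegral_congr_fun measurableSet_Ioi (
    (fun y (hy : c < y) => by
      rw [abs_of_pos (lt_of_le_of_lt hc hy),
        show -y/b = -(b⁻¹*y) by ring] :
      ∀ y ∈ Set.Ioi c, ENNReal.ofReal (1 / (2 * b) * Real.exp (-|y| / b))
        = ENNReal.ofReal (1 / (2 * b) * Real.exp (-(b⁻¹ * y)))))]
  rw [← ofReal_integral_eq_lintegral_ofReal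
      (((exp_neg_integrableOn_Ioi c (inv_pos.mpr hb)).congr_fun
        (fun y _ => by rw [neg_mul]) measurableSet_Ioi).const_mul _)
      (Filter.Eventually.of_forall fun x => by positivity)]
  rw [integral_const_mul, integral_comp_mul_left_Ioi (fun u => Real.exp (-u)) c (inv_pos.mpr hb),
    integral_exp_neg_Ioi]
  rw [smul_eq_mul, inv_inv]
  congr 1
  rw [show -(b⁻¹ * c) = -(c/b) by ring]
  field_simp

lemma laplace_tail {b c : ℝ} (hb : 0 < b) (hc : 0 ≤ c) :
    laplaceMeasure b {y : ℝ | c < |y|} ≤ ENNReal.ofReal (Real.exp (-(c/b))) := by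
  have hsub : {y : ℝ | c < |y|} ⊆ Set.Iio (-c) ∪ Set.Ioi c := by
    intro y hy
    simp only [Set.mem_setOf_eq] at hy
    rcases abs_cases y with ⟨h1, _⟩ | ⟨h1, _⟩
    · right; exact Set.mem_Ioi.mpr (h1 ▸ hy)
    · left; exact Set.mem_Iio.mpr (by rw [h1] at hy; linarith)
  refine le_trans (measure_mono hsub) (le_trans (measure_union_le _ _) ?_)
  have hIoi : laplaceMeasure b (Set.Ioi c) = ENNReal.ofReal (Real.exp (-(c/b)) / 2) := by
    rw [laplaceMeasure, withDensity_apply _ measurableSet_Ioi, laplace_piece hb hc]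
  have hIio : laplaceMeasure b (Set.Iio (-c)) = ENNReal.ofReal (Real.exp (-(c/b)) / 2) := by
    rw [laplaceMeasure, withDensity_apply _ measurableSet_Iio]
    have hmap : (volume : Measure ℝ) = Measure.map Neg.neg volume :=
      (Measure.map_neg_eq_self (volume : Measure ℝ)).symm
    rw [show (volume : Measure ℝ).restrict (Set.Iio (-c))
        = (Measure.map Neg.neg volume).restrict (Set.Iio (-c)) by rw [← hmap]]
    rw [Measure.restrict_map (measurable_neg) measurableSet_Iio]
    rw [lintegral_map (by fun_prop) measurable_neg]
    have : Neg.neg ⁻¹' (Set.Iio (-c)) = Set.Ioi c := by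
      ext y
      simp only [Set.mem_preimage, Set.mem_Iio, Set.mem_Ioi]
      constructor <;> intro h <;> linarith
    rw [this]
    simp_rw [abs_neg]
    exact laplace_piece hb hc
  rw [hIoi, hIio, ← ENNReal.ofReal_add (by positivity) (by positivity)]
  rw [add_halves]

variable {ι : Type*} [Fintype ι]

lemma laplace_integrable_exp {b l : ℝ} (hb : 0 < b) (hl : 0 ≤ l) (hlb : l * b < 1) :
    Integrable (fun y : ℝ => Real.exp (l * |y|)) (laplaceMeasure b) := by
  have hc : 0 < 1/b - l := by
    have : l < 1/b := by rw [lt_div_iff₀ hb]; exact hlb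
    linarith
  rw [laplaceMeasure, integrable_withDensity_iff (by fun_prop)
    (Filter.Eventually.of_forall fun x => ENNReal.ofReal_lt_top)]
  refine ((integrable_exp_neg_mul_abs hc).const_mul (1/(2*b))).congr
    (Filter.Eventually.of_forall fun y => ?_)
  show 1 / (2 * b) * Real.exp (-((1 / b - l) * |y|))
      = Real.exp (l * |y|) * (ENNReal.ofReal (1 / (2 * b) * Real.exp (-|y| / b))).toReal
  rw [ENNReal.toReal_ofReal (by positivity),
    show Real.exp (l * |y|) * (1 / (2 * b) * Real.exp (-|y| / b))
      = 1/(2*b) * Real.exp (l*|y| + -|y|/b) by rw [Real.exp_add]; ring]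
  congr 1
  field_simp
  ring

lemma laplace_bochner_mgf {b l : ℝ} (hb : 0 < b) (hl : 0 ≤ l) (hlb : l * b < 1) :
    ∫ y, Real.exp (l * |y|) ∂(laplaceMeasure b) = 1 / (1 - l * b) := by
  rw [integral_eq_lintegral_of_nonneg_ae (Filter.Eventually.of_forall fun y => (Real.exp_pos _).le)
    (Continuous.aestronglyMeasurable (by fun_prop))]
  have h2 : (0:ℝ) < 1 - l * b := by nlinarith
  rw [laplace_mgf hb hl hlb, ENNReal.toReal_ofReal (div_nonneg zero_le_one h2.le)]

lemma pi_laplace_chernoff {b l T : ℝ} (hb : 0 < b) (hl : 0 ≤ l) (hlb : l * b < 1) :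
    Measure.pi (fun _ : ι => laplaceMeasure b) {x : ι → ℝ | T < ∑ i, |x i|}
      ≤ ENNReal.ofReal (Real.exp (-(l * T)) * (1 / (1 - l * b)) ^ (Fintype.card ι)) := by
  haveI : IsProbabilityMeasure (laplaceMeasure b) := laplace_prob hb
  set P := Measure.pi (fun _ : ι => laplaceMeasure b) with hPdef
  have hmeas : MeasurableSet {x : ι → ℝ | T < ∑ i, |x i|} := by
    have : Measurable (fun x : ι → ℝ => ∑ i, |x i|) := by fun_prop
    exact measurableSet_lt measurable_const this
  set g : (ι → ℝ) → ℝ := fun x => Real.exp (-(l * T)) * ∏ i, Real.exp (l * |x i|) with hg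
  have hgeq : ∀ x : ι → ℝ, g x = Real.exp (l * (∑ i, |x i|) - l * T) := by
    intro x
    show Real.exp (-(l * T)) * ∏ i, Real.exp (l * |x i|) = _
    rw [← Real.exp_sum, ← Real.exp_add, Finset.mul_sum]
    ring_nf
  have hprod : Integrable (fun x : ι → ℝ => ∏ i, Real.exp (l * |x i|)) P := by
    letI : MeasureSpace ℝ := ⟨laplaceMeasure b⟩
    exact Integrable.fintype_prod (f := fun _ y => Real.exp (l * |y|))
      (fun i => laplace_integrable_exp hb hl hlb)
  have hInt : Integrable g P := hprod.const_mul _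
  calc P {x : ι → ℝ | T < ∑ i, |x i|}
      = ∫⁻ x, ({x : ι → ℝ | T < ∑ i, |x i|}).indicator 1 x ∂P :=
        (lintegral_indicator_one hmeas).symm
    _ ≤ ∫⁻ x, ENNReal.ofReal (g x) ∂P := by
        refine lintegral_mono fun x => ?_
        by_cases hx : x ∈ {x : ι → ℝ | T < ∑ i, |x i|}
        · rw [Set.indicator_of_mem hx]
          refine ENNReal.one_le_ofReal.2 ?_
          rw [hgeq]
          refine Real.one_le_exp ?_
          have := hx
          simp only [Set.mem_setOf_eq] at this
          nlinarith [mul_le_mul_of_nonneg_left this.le hl]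
        · rw [Set.indicator_of_notMem hx]; exact zero_le
    _ = ENNReal.ofReal (∫ x, g x ∂P) :=
        (ofReal_integral_eq_lintegral_ofReal hInt
          (Filter.Eventually.of_forall fun x => by
            rw [hgeq]; exact (Real.exp_pos _).le)).symm
    _ = ENNReal.ofReal (Real.exp (-(l * T)) * (1 / (1 - l * b)) ^ (Fintype.card ι)) := by
        congr 1
        rw [hg]
        rw [integral_const_mul]
        congr 1
        have : ∫ x : ι → ℝ, ∏ i, Real.exp (l * |x i|) ∂P
            = (∫ y, Real.exp (l * |y|) ∂(laplaceMeasure b)) ^ (Fintype.card ι) := by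
          letI : MeasureSpace ℝ := ⟨laplaceMeasure b⟩
          exact integral_fintype_prod_eq_pow (fun y => Real.exp (l * |y|))
        rw [this, laplace_bochner_mgf hb hl hlb]

lemma laplace_box {b c : ℝ} (hb : 0 < b) (hc : 0 ≤ c) :
    ENNReal.ofReal (1 - Real.exp (-(c/b))) ≤ laplaceMeasure b {y : ℝ | |y| ≤ c} := by
  haveI : IsProbabilityMeasure (laplaceMeasure b) := laplace_prob hb
  have hmeas : MeasurableSet {y : ℝ | c < |y|} :=
    measurableSet_lt measurable_const measurable_abs
  have hcompl : {y : ℝ | |y| ≤ c} = {y : ℝ | c < |y|}ᶜ := by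
    ext y; simp [not_lt]
  rw [hcompl, prob_compl_eq_one_sub hmeas]
  calc ENNReal.ofReal (1 - Real.exp (-(c/b)))
      = 1 - ENNReal.ofReal (Real.exp (-(c/b))) := by
        rw [ENNReal.ofReal_sub _ (Real.exp_pos _).le, ENNReal.ofReal_one]
    _ ≤ 1 - laplaceMeasure b {y : ℝ | c < |y|} :=
        tsub_le_tsub_left (laplace_tail hb hc) 1

lemma pi_laplace_box {b c : ℝ} (hb : 0 < b) (hc : 0 ≤ c) :
    ENNReal.ofReal ((1 - Real.exp (-(c/b))) ^ (Fintype.card ι))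
      ≤ Measure.pi (fun _ : ι => laplaceMeasure b) {x : ι → ℝ | ∀ i, |x i| ≤ c} := by
  haveI : IsProbabilityMeasure (laplaceMeasure b) := laplace_prob hb
  have hset : {x : ι → ℝ | ∀ i, |x i| ≤ c}
      = Set.pi Set.univ (fun _ : ι => {y : ℝ | |y| ≤ c}) := by
    ext x; simp [Set.mem_pi]
  rw [hset, Measure.pi_pi]
  have hexp1 : Real.exp (-(c/b)) ≤ 1 :=
    Real.exp_le_one_iff.mpr (neg_nonpos.mpr (by positivity))
  calc ENNReal.ofReal ((1 - Real.exp (-(c/b))) ^ (Fintype.card ι))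
      = (ENNReal.ofReal (1 - Real.exp (-(c/b)))) ^ (Fintype.card ι) :=
        ENNReal.ofReal_pow (by linarith) _
    _ = ∏ _i : ι, ENNReal.ofReal (1 - Real.exp (-(c/b))) := by
        rw [Finset.prod_const, Finset.card_univ]
    _ ≤ ∏ _i : ι, laplaceMeasure b {y : ℝ | |y| ≤ c} :=
        Finset.prod_le_prod' fun i _ => laplace_box hb hc

lemma R1 {t : ℝ} (ht : 1 ≤ t) : 1 - Real.exp (-t) ≤ (1 - Real.exp (-(2*t)))^3 := by
  have hu0 : 0 < Real.exp (-t) := Real.exp_pos _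
  have hu1 : Real.exp (-t) ≤ 0.368 := by
    have h1 : Real.exp (-t) ≤ Real.exp (-1) := Real.exp_le_exp.2 (by linarith)
    have h2 : Real.exp (-1) = (Real.exp 1)⁻¹ := by rw [Real.exp_neg]
    have h3 : (2.7182818283 : ℝ) < Real.exp 1 := Real.exp_one_gt_d9
    have : (Real.exp 1)⁻¹ ≤ 0.368 := by
      rw [inv_le_comm₀ (by linarith) (by norm_num)]
      linarith
    linarith
  have hsq : Real.exp (-(2*t)) = Real.exp (-t) * Real.exp (-t) := by
    rw [← Real.exp_add]; ring_nf
  rw [hsq]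
  set u := Real.exp (-t)
  have h : (0:ℝ) ≤ 0.368 - u := by linarith
  have h0 : (0:ℝ) ≤ u := hu0.le
  nlinarith [mul_nonneg h h0, mul_nonneg (mul_nonneg h h0) h0,
    mul_nonneg (mul_nonneg (mul_nonneg h h0) h0) h0,
    mul_nonneg (mul_nonneg (mul_nonneg (mul_nonneg h h0) h0) h0) h0,
    mul_nonneg (mul_nonneg h h) h0, mul_nonneg (mul_nonneg (mul_nonneg h h) h0) h0]

lemma R2 {t : ℝ} {n : ℕ} (ht : 1 ≤ t) (hn : 4 ≤ n) :
    Real.exp (-((1 - 1/(2*t)) * (2*t*n))) * (2*t)^n ≤ Real.exp (-t) := by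
  have ht0 : (0:ℝ) < t := by linarith
  have h2t : (0:ℝ) < 2*t := by linarith
  have hpow : (2*t)^n = Real.exp (n * Real.log (2*t)) := by
    rw [← Real.log_pow, Real.exp_log (by positivity)]
  rw [hpow, ← Real.exp_add]
  rw [Real.exp_le_exp]
  have hth : (1 - 1/(2*t)) * (2*t*(n:ℝ)) = (2*t - 1) * n := by field_simp
  rw [hth]
  have hlog : Real.log (2*t) ≤ Real.log 2 + (t - 1) := by
    rw [Real.log_mul (by norm_num) ht0.ne']
    have := Real.log_le_sub_one_of_pos ht0
    linarith
  have hlog2 : Real.log 2 < 0.6931471808 := Real.log_two_lt_d9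
  have hn4 : (4:ℝ) ≤ (n:ℝ) := by exact_mod_cast hn
  have hnn : (0:ℝ) ≤ (n:ℝ) := by positivity
  have key : (n:ℝ) * Real.log (2*t) ≤ (n:ℝ) * (Real.log 2 + (t-1)) :=
    mul_le_mul_of_nonneg_left hlog hnn
  nlinarith [mul_le_mul_of_nonneg_right (by linarith : (4:ℝ) ≤ (n:ℝ))
    (by linarith : (0:ℝ) ≤ t - Real.log 2)]

end helpers

theorem stmt_10 (k : ℕ) (S : Finset (Fin k → Bool)) (hS : S.Nonempty)
    (ε t : ℝ) (hε : 0 < ε) (ht : 1 ≤ t)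
    (h : (Fin k → Bool) → ℝ) (hpos : ∀ η, 0 ≤ h η)
    (P : Measure (↥S → ℝ))
    (hP : P = Measure.pi fun _ : ↥S =>
      laplaceMeasure (2 * S.card / ε * (2 : ℝ) ^ (-(k : ℝ) / 2))) :
    ENNReal.ofReal (1 - Real.exp (-t)) ≤
      P {x | ∀ η, 0 ≤ h η + (∑ γ : ↥S, x γ * cubeFourier γ.1 η) +
          4 * t * (S.card : ℝ) ^ 2 / ε * (2 : ℝ) ^ (-(k : ℝ) / 2) *
            cubeFourier (fun _ => false) η} ∧
    ENNReal.ofReal (1 - Real.exp (-t)) ≤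
      P {x | ∑ γ : ↥S, |x γ| ≤
          4 * t * (S.card : ℝ) ^ 2 / (ε * (2 : ℝ) ^ ((k : ℝ) / 2))} := by
  subst hP
  have hcard : 0 < S.card := Finset.card_pos.mpr hS
  have hcardR : (0:ℝ) < S.card := by exact_mod_cast hcard
  set b : ℝ := 2 * S.card / ε * (2:ℝ)^(-(k:ℝ)/2) with hbdef
  have hp2 : (0:ℝ) < (2:ℝ)^((k:ℝ)/2) := Real.rpow_pos_of_pos two_pos _
  have hp2' : (0:ℝ) < (2:ℝ)^(-(k:ℝ)/2) := Real.rpow_pos_of_pos two_pos _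
  have hb : 0 < b := by
    rw [hbdef]
    exact mul_pos (div_pos (by linarith) hε) hp2'
  have hrw : (2:ℝ)^(-(k:ℝ)/2) = ((2:ℝ)^((k:ℝ)/2))⁻¹ := by
    rw [neg_div, Real.rpow_neg (by norm_num)]
  set T : ℝ := 4 * t * (S.card:ℝ)^2 / (ε * (2:ℝ)^((k:ℝ)/2)) with hTdef
  have hT : T = 2 * t * S.card * b := by
    rw [hTdef, hbdef, hrw]
    field_simp
    ring
  haveI : IsProbabilityMeasure (laplaceMeasure b) := laplace_prob hb
  set P : Measure (↥S → ℝ) := Measure.pi fun _ : ↥S => laplaceMeasure b with hPdef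
  have hmeas : MeasurableSet {x : ↥S → ℝ | ∑ γ, |x γ| ≤ T} := by
    have : Measurable (fun x : ↥S → ℝ => ∑ γ, |x γ|) := by fun_prop
    exact measurableSet_le this measurable_const
  -- second conjunct
  have main2 : ENNReal.ofReal (1 - Real.exp (-t)) ≤ P {x : ↥S → ℝ | ∑ γ, |x γ| ≤ T} := by
    by_cases hc3 : S.card ≤ 3
    · -- small case: box bound
      have hbox : {x : ↥S → ℝ | ∀ γ, |x γ| ≤ 2*t*b} ⊆ {x : ↥S → ℝ | ∑ γ, |x γ| ≤ T} := by
        intro x hx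
        simp only [Set.mem_setOf_eq] at hx ⊢
        calc ∑ γ, |x γ| ≤ ∑ _γ : ↥S, 2*t*b := Finset.sum_le_sum (fun γ _ => hx γ)
          _ = (Fintype.card ↥S : ℝ) * (2*t*b) := by
              rw [Finset.sum_const, Finset.card_univ, nsmul_eq_mul]
          _ = T := by rw [Fintype.card_coe, hT]; ring
      have hc0 : (0:ℝ) ≤ 2*t*b := by positivity
      have hcb : (2*t*b)/b = 2*t := by field_simp
      have hexp1 : Real.exp (-(2*t)) ≤ 1 :=
        Real.exp_le_one_iff.mpr (neg_nonpos.mpr (by linarith))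
      calc ENNReal.ofReal (1 - Real.exp (-t))
          ≤ ENNReal.ofReal ((1 - Real.exp (-((2*t*b)/b)))^(Fintype.card ↥S)) := by
            apply ENNReal.ofReal_le_ofReal
            rw [hcb]
            refine le_trans (R1 ht) ?_
            refine pow_le_pow_of_le_one (by linarith)
              (by have := (Real.exp_pos (-(2*t))).le; linarith) ?_
            rw [Fintype.card_coe]; exact hc3
        _ ≤ P {x : ↥S → ℝ | ∀ γ, |x γ| ≤ 2*t*b} := pi_laplace_box hb hc0
        _ ≤ P {x : ↥S → ℝ | ∑ γ, |x γ| ≤ T} := measure_mono hbox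
    · -- large case: Chernoff
      push_neg at hc3
      have hn4 : 4 ≤ S.card := hc3
      set l : ℝ := (1 - 1/(2*t))/b with hldef
      have h2t : (0:ℝ) < 2*t := by linarith
      have hth0 : (0:ℝ) ≤ 1 - 1/(2*t) := by
        rw [sub_nonneg, div_le_one h2t]; linarith
      have hl : 0 ≤ l := div_nonneg hth0 hb.le
      have hlb : l * b = 1 - 1/(2*t) := div_mul_cancel₀ _ hb.ne'
      have hlb1 : l * b < 1 := by
        rw [hlb]
        have : (0:ℝ) < 1/(2*t) := by positivity
        linarith
      have hval : Real.exp (-(l * T)) * (1 / (1 - l * b)) ^ (Fintype.card ↥S)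
          = Real.exp (-((1 - 1/(2*t)) * (2*t*(S.card:ℝ)))) * (2*t)^(S.card) := by
        rw [Fintype.card_coe]
        congr 2
        · rw [hT, hldef]
          field_simp
        · rw [hlb]
          rw [show (1:ℝ) - (1 - 1/(2*t)) = 1/(2*t) by ring]
          rw [one_div_one_div]
      have hchern : P {x : ↥S → ℝ | ∑ γ, |x γ| ≤ T}ᶜ ≤ ENNReal.ofReal (Real.exp (-t)) := by
        have hcompl : {x : ↥S → ℝ | ∑ γ, |x γ| ≤ T}ᶜ = {x : ↥S → ℝ | T < ∑ γ, |x γ|} := by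
          ext x; simp [not_le]
        rw [hcompl]
        refine le_trans (pi_laplace_chernoff hb hl hlb1) ?_
        apply ENNReal.ofReal_le_ofReal
        rw [hval]
        exact R2 ht hn4
      calc ENNReal.ofReal (1 - Real.exp (-t))
          = 1 - ENNReal.ofReal (Real.exp (-t)) := by
            rw [ENNReal.ofReal_sub _ (Real.exp_pos _).le, ENNReal.ofReal_one]
        _ ≤ 1 - P {x : ↥S → ℝ | ∑ γ, |x γ| ≤ T}ᶜ := tsub_le_tsub_left hchern 1
        _ = P {x : ↥S → ℝ | ∑ γ, |x γ| ≤ T} := by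
            rw [prob_compl_eq_one_sub hmeas]
            exact ENNReal.sub_sub_cancel ENNReal.one_ne_top prob_le_one
  constructor
  · -- first conjunct: the nonnegativity event contains the sum event
    refine le_trans main2 (measure_mono ?_)
    intro x hx
    simp only [Set.mem_setOf_eq] at hx ⊢
    intro η
    have hf0 : cubeFourier (fun _ => false) η = (2:ℝ)^(-(k:ℝ)/2) := by
      have : cubeInner η (fun _ => false) = 0 := by
        simp [cubeInner]
      rw [cubeFourier, this, pow_zero, one_mul]
    have hFabs : ∀ j : Fin k → Bool, |cubeFourier j η| = (2:ℝ)^(-(k:ℝ)/2) := by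
      intro j
      rw [cubeFourier, abs_mul, abs_pow, abs_neg, abs_one, one_pow, one_mul,
        abs_of_pos hp2']
    have habs : |∑ γ : ↥S, x γ * cubeFourier γ.1 η| ≤ T * (2:ℝ)^(-(k:ℝ)/2) := by
      calc |∑ γ : ↥S, x γ * cubeFourier γ.1 η|
          ≤ ∑ γ : ↥S, |x γ * cubeFourier γ.1 η| := Finset.abs_sum_le_sum_abs _ _
        _ = ∑ γ : ↥S, |x γ| * (2:ℝ)^(-(k:ℝ)/2) := by
            refine Finset.sum_congr rfl fun γ _ => ?_
            rw [abs_mul, hFabs]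
        _ = (∑ γ : ↥S, |x γ|) * (2:ℝ)^(-(k:ℝ)/2) := (Finset.sum_mul _ _ _).symm
        _ ≤ T * (2:ℝ)^(-(k:ℝ)/2) := mul_le_mul_of_nonneg_right hx hp2'.le
    have hcoef : 4 * t * (S.card:ℝ)^2 / ε * (2:ℝ)^(-(k:ℝ)/2) = T := by
      rw [hTdef, hrw]
      field_simp
    rw [hf0, hcoef]
    have h1 := (abs_le.mp habs).1
    have h2 := hpos η
    linarith
  · exact main2
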